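/- Let N ≥ 2 and let s_1⋯s_q and t_1⋯t_p be admissible blocks with q ≥ p. If s_1⋯s_p > t_1⋯t_p lexicographically (as length-p blocks), then the generalized Thue–Morse sequence generated by s_1⋯s_q^+ is lexicographically ≥ the generalized Thue–Morse sequence generated by t_1⋯t_p^+. -/

import Mathlib

/-- Reflection of a block: each digit `c` becomes `N - 1 - c`. -/
def reflB (N : ℕ) (w : List ℕ) : List ℕ := w.map (fun c => N - 1 - c)

/-- The block `w` with its last digit incremented by one. -/
def plusB (w : List ℕ) : List ℕ := w.dropLast ++ [w.getLast! + 1]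

/-- The `i`-th cyclic rotation of the block `w` (0-indexed). -/
def rotB (w : List ℕ) (i : ℕ) : List ℕ := w.drop i ++ w.take i

/-- The lexicographic inequalities defining admissibility of a block. -/
def AdmissibleIneq (N : ℕ) (w : List ℕ) : Prop :=
  ∀ i < w.length,
    reflB N w ≤ rotB w i ∧ plusB (w.drop i) ++ reflB N (w.take i) ≤ plusB w

/-- An admissible block in `{0, …, N-1}`. -/
def Admissible (N : ℕ) (w : List ℕ) : Prop :=
  w ≠ [] ∧ (∀ c ∈ w, c < N) ∧ w.getLast! < N - 1 ∧ AdmissibleIneq N w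

/-- Prefixes of the generalized Thue–Morse sequence generated by `plusB w`:
`gtmBlock N w n` is the prefix `θ_1 ⋯ θ_{2^n p}`. -/
def gtmBlock (N : ℕ) (w : List ℕ) : ℕ → List ℕ
  | 0 => plusB w
  | n + 1 => gtmBlock N w n ++ plusB (reflB N (gtmBlock N w n))

/-- The generalized Thue–Morse sequence generated by `plusB w`, 0-indexed:
`gtm N w n = θ_{n+1}`. -/
def gtm (N : ℕ) (w : List ℕ) : ℕ → ℕ := fun n => (gtmBlock N w n).getD n 0

/-- Strict lexicographic order on infinite sequences of digits. -/
def seqLt (a b : ℕ → ℕ) : Prop := ∃ n, (∀ k < n, a k = b k) ∧ a n < b n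

/-- Lexicographic order on infinite sequences of digits. -/
def seqLe (a b : ℕ → ℕ) : Prop := seqLt a b ∨ a = b

/-- Shift of a sequence by `k` places. -/
def shift (a : ℕ → ℕ) (k : ℕ) : ℕ → ℕ := fun n => a (n + k)

/-- The periodic sequence `w^∞` obtained by repeating the block `w`. -/
def per (w : List ℕ) : ℕ → ℕ := fun n => w.getD (n % w.length) 0

/-- Reflection of an infinite sequence. -/
def reflSeq (N : ℕ) (a : ℕ → ℕ) : ℕ → ℕ := fun n => N - 1 - a n

/-- The classical Thue–Morse sequence: parity of the binary digit sum. -/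
def tm (i : ℕ) : ℕ := (Nat.digits 2 i).sum % 2

/-- Number of length-`n` words appearing in sequences of `Z`. -/
noncomputable def wordCount (Z : Set (ℕ → ℕ)) (n : ℕ) : ℕ :=
  Set.ncard { u : List ℕ | u.length = n ∧ ∃ d ∈ Z, ∀ k < n, u.getD k 0 = d k }

/-- `Z` has topological entropy `h`. -/
def hasEntropy (Z : Set (ℕ → ℕ)) (h : ℝ) : Prop :=
  Filter.Tendsto (fun n : ℕ => Real.log (wordCount Z n) / n) Filter.atTop (nhds h)

namespace S10


lemma lt_split (c : List ℕ) {a b : ℕ} (h : a < b) (x y : List ℕ) :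
    c ++ a :: x < c ++ b :: y := by
  induction c with
  | nil => exact List.Lex.rel h
  | cons hd tl ih => exact List.Lex.cons ih

lemma not_le_split (c : List ℕ) {a b : ℕ} (h : b < a) (x y : List ℕ) :
    ¬ (c ++ a :: x ≤ c ++ b :: y) := not_le.mpr (lt_split c h y x)

lemma append_lt_left {x y : List ℕ} (c : List ℕ) : c ++ x < c ++ y ↔ x < y := by
  induction c with
  | nil => exact Iff.rfl
  | cons hd tl ih =>
    constructor
    · intro hxy
      have h2 : List.Lex (·<·) (hd :: (tl ++ x)) (hd :: (tl ++ y)) := hxy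
      rw [List.lex_cons_iff] at h2
      exact ih.mp h2
    · intro hxy
      exact List.Lex.cons (ih.mpr hxy)

lemma append_le_left {x y : List ℕ} (c : List ℕ) : c ++ x ≤ c ++ y ↔ x ≤ y := by
  rw [← not_lt, ← not_lt, append_lt_left]

lemma lcp : ∀ (x y : List ℕ),
    (∃ c a b x' y', a ≠ b ∧ x = c ++ a :: x' ∧ y = c ++ b :: y') ∨ x <+: y ∨ y <+: x
  | [], y => Or.inr (Or.inl (List.nil_prefix))
  | x, [] => Or.inr (Or.inr (List.nil_prefix))
  | a :: x, b :: y => by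
    by_cases hab : a = b
    · subst hab
      rcases lcp x y with ⟨c, a', b', x', y', hne, hx, hy⟩ | h | h
      · exact Or.inl ⟨a :: c, a', b', x', y', hne, by simp [hx], by simp [hy]⟩
      · exact Or.inr (Or.inl (List.cons_prefix_cons.mpr ⟨rfl, h⟩))
      · exact Or.inr (Or.inr (List.cons_prefix_cons.mpr ⟨rfl, h⟩))
    · exact Or.inl ⟨[], a, b, x, y, hab, rfl, rfl⟩

/-! ### plusB / reflB lemmas -/

lemma plusB_concat (c : List ℕ) (a : ℕ) : plusB (c ++ [a]) = c ++ [a + 1] := by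
  unfold plusB
  rw [List.dropLast_concat, List.getLast!_of_getLast? List.getLast?_concat]

lemma exists_concat {z : List ℕ} (hz : z ≠ []) : ∃ c a, z = c ++ [a] := by
  rcases List.eq_nil_or_concat z with h | ⟨c, a, h⟩
  · exact absurd h hz
  · exact ⟨c, a, by simpa using h⟩

lemma plusB_append (x : List ℕ) {z : List ℕ} (hz : z ≠ []) :
    plusB (x ++ z) = x ++ plusB z := by
  obtain ⟨c, a, rfl⟩ := exists_concat hz
  rw [← List.append_assoc, plusB_concat, plusB_concat, List.append_assoc]

lemma plusB_cons {z : List ℕ} (a : ℕ) (hz : z ≠ []) :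
    plusB (a :: z) = a :: plusB z := plusB_append [a] hz

lemma plusB_length {w : List ℕ} (hw : w ≠ []) : (plusB w).length = w.length := by
  obtain ⟨c, a, rfl⟩ := exists_concat hw
  simp [plusB_concat]

lemma plusB_ne_nil (w : List ℕ) : plusB w ≠ [] := by
  unfold plusB; simp

lemma lt_plusB {z : List ℕ} (hz : z ≠ []) (W W' : List ℕ) :
    z ++ W < plusB z ++ W' := by
  obtain ⟨c, a, rfl⟩ := exists_concat hz
  rw [plusB_concat, List.append_assoc, List.append_assoc]
  exact lt_split c (Nat.lt_succ_self a) _ _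

lemma plusB_getD_lt {w : List ℕ} {j : ℕ} (hj : j < w.length - 1) :
    (plusB w).getD j 0 = w.getD j 0 := by
  have hw : w ≠ [] := by rintro rfl; simp at hj
  obtain ⟨c, a, rfl⟩ := exists_concat hw
  have hj' : j < c.length := by simpa using hj
  rw [plusB_concat, List.getD_append _ _ _ _ hj', List.getD_append _ _ _ _ hj']

lemma plusB_getD_last {w : List ℕ} (hw : w ≠ []) :
    (plusB w).getD (w.length - 1) 0 = w.getD (w.length - 1) 0 + 1 := by
  obtain ⟨c, a, rfl⟩ := exists_concat hw
  have h1 : (c ++ [a]).length - 1 = c.length := by simp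
  rw [plusB_concat, h1, List.getD_append_right _ _ _ _ le_rfl,
    List.getD_append_right _ _ _ _ le_rfl]
  simp

lemma getD_le_plusB {w : List ℕ} {j : ℕ} (hj : j < w.length) :
    w.getD j 0 ≤ (plusB w).getD j 0 := by
  have hw : w ≠ [] := by rintro rfl; simp at hj
  rcases Nat.lt_or_ge j (w.length - 1) with h | h
  · rw [plusB_getD_lt h]
  · have : j = w.length - 1 := by omega
    subst this
    rw [plusB_getD_last hw]
    omega

lemma reflB_length (N : ℕ) (w : List ℕ) : (reflB N w).length = w.length := by
  simp [reflB]

lemma reflB_ne_nil {N : ℕ} {w : List ℕ} (hw : w ≠ []) : reflB N w ≠ [] := by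
  simpa [reflB]

lemma reflB_append (N : ℕ) (x y : List ℕ) :
    reflB N (x ++ y) = reflB N x ++ reflB N y := by simp [reflB]

lemma reflB_reflB {N : ℕ} {w : List ℕ} (hw : ∀ c ∈ w, c ≤ N - 1) :
    reflB N (reflB N w) = w := by
  induction w with
  | nil => rfl
  | cons a l ih =>
    have ha : a ≤ N - 1 := hw a (by simp)
    simp only [reflB, List.map_cons] at *
    rw [Nat.sub_sub_self ha]
    have := ih (fun c hc => hw c (by simp [hc]))
    simpa [reflB] using this

lemma reflB_getD {N : ℕ} {w : List ℕ} {j : ℕ} (hj : j < w.length) :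
    (reflB N w).getD j 0 = N - 1 - w.getD j 0 := by
  rw [List.getD_eq_getElem _ _ (by simpa [reflB_length] using hj),
    List.getD_eq_getElem _ _ hj]
  simp [reflB]

lemma reflB_le {N : ℕ} {w : List ℕ} (hw : ∀ c ∈ w, c ≤ N - 1) :
    ∀ c ∈ reflB N w, c ≤ N - 1 := by
  intro c hc
  simp only [reflB, List.mem_map] at hc
  obtain ⟨d, _, rfl⟩ := hc
  omega

lemma getD_take {s : List ℕ} {n j : ℕ} (h : j < n) (hn : n ≤ s.length) :
    (s.take n).getD j 0 = s.getD j 0 := by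
  have hj : j < (s.take n).length := by simp; omega
  rw [List.getD_eq_getElem _ _ hj, List.getD_eq_getElem _ _ (by simp at hj; omega)]
  exact (s.take_prefix n).getElem hj


def blk (N : ℕ) (u : List ℕ) : ℕ → List ℕ
  | 0 => u
  | n + 1 => blk N u n ++ plusB (reflB N (blk N u n))

lemma gtmBlock_eq_blk (N : ℕ) (w : List ℕ) (n : ℕ) :
    gtmBlock N w n = blk N (plusB w) n := by
  induction n with
  | zero => rfl
  | succ n ih => simp [gtmBlock, blk, ih]

lemma gtm_eq_blk (N : ℕ) (w : List ℕ) :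
    gtm N w = fun n => (blk N (plusB w) n).getD n 0 := by
  funext n; simp [gtm, gtmBlock_eq_blk]

lemma blk_length {N : ℕ} {u : List ℕ} (hu : u ≠ []) (n : ℕ) :
    (blk N u n).length = 2 ^ n * u.length ∧ blk N u n ≠ [] := by
  induction n with
  | zero => simpa [blk] using hu
  | succ n ih =>
    obtain ⟨hlen, hne⟩ := ih
    constructor
    · have h1 : (reflB N (blk N u n)) ≠ [] := reflB_ne_nil hne
      have h2 : (plusB (reflB N (blk N u n))).length = (blk N u n).length := by
        rw [plusB_length h1, reflB_length]
      show (blk N u n ++ plusB (reflB N (blk N u n))).length = _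
      rw [List.length_append, h2, hlen]
      ring
    · show blk N u n ++ plusB (reflB N (blk N u n)) ≠ []
      simp [plusB_ne_nil]

lemma blk_prefix {N : ℕ} (u : List ℕ) : ∀ {n m : ℕ}, n ≤ m → blk N u n <+: blk N u m := by
  intro n m h
  induction m with
  | zero => simp_all
  | succ m ih =>
    rcases Nat.lt_or_ge n (m+1) with h' | h'
    · exact (ih (by omega)).trans ⟨_, rfl⟩
    · have : n = m + 1 := by omega
      subst this; exact List.prefix_rfl

lemma blk_getD_stab {N : ℕ} {u : List ℕ} {n k m : ℕ} (hkm : k ≤ m)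
    (h : n < (blk N u k).length) :
    (blk N u m).getD n 0 = (blk N u k).getD n 0 := by
  have hpre := blk_prefix (N := N) u hkm
  have h2 : n < (blk N u m).length := lt_of_lt_of_le h hpre.length_le
  rw [List.getD_eq_getElem _ _ h, List.getD_eq_getElem _ _ h2]
  exact (hpre.getElem h).symm

lemma G_eval0 {N : ℕ} {u : List ℕ} {n : ℕ} (hn : n < u.length) :
    (blk N u n).getD n 0 = u.getD n 0 :=
  blk_getD_stab (Nat.zero_le n) (by simpa [blk] using hn)

lemma G_eval1 {N : ℕ} {u : List ℕ} {n : ℕ} (hu : u ≠ []) (hn : n < 2 * u.length) :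
    (blk N u n).getD n 0 = (u ++ plusB (reflB N u)).getD n 0 := by
  rcases Nat.lt_or_ge n u.length with h | h
  · rw [G_eval0 h, List.getD_append _ _ _ _ h]
  · have h1 : 1 ≤ n := by
      have := List.length_pos_iff.mpr hu; omega
    have h2 : n < (blk N u 1).length := by
      rw [(blk_length hu 1).1]; omega
    have h3 := blk_getD_stab (u := u) (N := N) h1 h2
    rw [h3]
    rfl

lemma blk_shift {N : ℕ} (u : List ℕ) (n : ℕ) :
    blk N (u ++ plusB (reflB N u)) n = blk N u (n + 1) := by
  induction n with
  | zero => rfl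
  | succ n ih => simp [blk, ih]

lemma G_shift {N : ℕ} {u : List ℕ} (hu : u ≠ []) :
    (fun n => (blk N (u ++ plusB (reflB N u)) n).getD n 0)
      = fun n => (blk N u n).getD n 0 := by
  funext n
  rw [blk_shift]
  exact blk_getD_stab (Nat.le_succ n) (by
    rw [(blk_length hu n).1]
    calc n < 2 ^ n := Nat.lt_two_pow_self
    _ ≤ 2 ^ n * u.length := Nat.le_mul_of_pos_right _ (List.length_pos_iff.mpr hu))

lemma plusB_head (a : ℕ) (z₁ : List ℕ) :
    ∃ a' w', plusB (a :: z₁) = a' :: w' ∧ a ≤ a' := by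
  by_cases h : z₁ = []
  · subst h
    exact ⟨a + 1, [], by simpa using plusB_concat [] a, Nat.le_succ a⟩
  · exact ⟨a, plusB z₁, plusB_cons a h, le_rfl⟩

lemma Zlem {N : ℕ} {u : List ℕ} (hu : u ≠ []) (hub : ∀ c ∈ u, c ≤ N - 1) :
    ∀ (n : ℕ) (z : List ℕ), z.length ≤ n → z ≠ [] →
      (¬ ((u ++ reflB N z ≤ z ++ u) ∧
          (plusB z ++ (reflB N u ++ u) ≤ u ++ (reflB N u ++ plusB z)))) ∧
      (¬ ((reflB N u ++ reflB N z ≤ z ++ u) ∧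
          (plusB z ++ (reflB N u ++ u) ≤ reflB N u ++ (u ++ plusB z)))) := by
  have hp : 1 ≤ u.length := List.length_pos_iff.mpr hu
  have hru : reflB N u ≠ [] := reflB_ne_nil hu
  have hrr : reflB N (reflB N u) = u := reflB_reflB hub
  intro n
  induction n with
  | zero =>
    intro z hzn hz
    exact absurd (List.length_eq_zero_iff.mp (Nat.le_zero.mp hzn)) hz
  | succ n ih =>
    intro z hzn hz
    constructor
    · rintro ⟨A1, B1⟩
      rcases lcp z u with ⟨c, a, b, z₁, u₁, hab, hzc, huc⟩ | hpre | hpre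
      · rcases Nat.lt_or_ge a b with h | h
        · rw [hzc, huc] at A1
          simp only [List.append_assoc, List.cons_append] at A1
          exact not_le_split c h _ _ A1
        · have h' : b < a := by omega
          obtain ⟨a', w', hpw, ha'⟩ := plusB_head a z₁
          rw [hzc, huc, plusB_append c (by simp), hpw] at B1
          simp only [List.append_assoc, List.cons_append] at B1
          exact not_le_split c (lt_of_lt_of_le h' ha') _ _ B1
      · obtain ⟨u₂, hu2⟩ := hpre
        rw [← hu2] at B1
        simp only [List.append_assoc] at B1
        exact not_le.mpr (lt_plusB hz _ _) B1
      · obtain ⟨z', hz'⟩ := hpre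
        by_cases hz'nil : z' = []
        · rw [hz'nil, List.append_nil] at hz'
          rw [hz'] at B1
          exact not_le.mpr (lt_plusB hz _ _) B1
        · have hlen : z'.length ≤ n := by
            have : z.length = u.length + z'.length := by rw [← hz']; simp
            omega
          apply (ih z' hlen hz'nil).2
          constructor
          · rw [← hz', reflB_append] at A1
            simp only [List.append_assoc] at A1
            exact (append_le_left u).mp A1
          · rw [← hz', plusB_append u hz'nil] at B1
            simp only [List.append_assoc] at B1
            exact (append_le_left u).mp B1
    · rintro ⟨A2, B2⟩
      rcases lcp z (reflB N u) with ⟨c, a, b, z₁, v₁, hab, hzc, hvc⟩ | hpre | hpre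
      · rcases Nat.lt_or_ge a b with h | h
        · rw [hzc, hvc] at A2
          simp only [List.append_assoc, List.cons_append] at A2
          exact not_le_split c h _ _ A2
        · have h' : b < a := by omega
          obtain ⟨a', w', hpw, ha'⟩ := plusB_head a z₁
          rw [hzc, hvc, plusB_append c (by simp), hpw] at B2
          simp only [List.append_assoc, List.cons_append] at B2
          exact not_le_split c (lt_of_lt_of_le h' ha') _ _ B2
      · obtain ⟨v₂, hv2⟩ := hpre
        rw [← hv2] at B2
        simp only [List.append_assoc] at B2
        exact not_le.mpr (lt_plusB hz _ _) B2
      · obtain ⟨z'', hz''⟩ := hpre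
        by_cases hznil : z'' = []
        · rw [hznil, List.append_nil] at hz''
          rw [hz''] at B2
          exact not_le.mpr (lt_plusB hz _ _) B2
        · have hlen : z''.length ≤ n := by
            have : z.length = (reflB N u).length + z''.length := by rw [← hz'']; simp
            rw [reflB_length] at this
            omega
          apply (ih z'' hlen hznil).1
          constructor
          · rw [← hz'', reflB_append, hrr] at A2
            simp only [List.append_assoc] at A2
            exact (append_le_left (reflB N u)).mp A2
          · rw [← hz'', plusB_append (reflB N u) hznil] at B2
            simp only [List.append_assoc] at B2
            exact (append_le_left (reflB N u)).mp B2

lemma main (N : ℕ) (hN : 2 ≤ N) :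
    ∀ (K : ℕ) (u s : List ℕ), s.length - u.length ≤ K → u ≠ [] →
      (∀ c ∈ u, c ≤ N - 1) → 1 ≤ u.getD (u.length - 1) 0 →
      Admissible N s → u.length ≤ s.length → u ≤ s.take u.length →
      seqLe (fun n => (blk N u n).getD n 0) (gtm N s) := by
  intro K
  induction K using Nat.strong_induction_on with
  | _ K ih =>
  intro u s hK hu hub hulast hs hle hup
  obtain ⟨hsne, hsdig, hslast, hsineq⟩ := hs
  have hp1 : 1 ≤ u.length := List.length_pos_iff.mpr hu
  have hq1 : 1 ≤ s.length := List.length_pos_iff.mpr hsne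
  have hgtm : gtm N s = fun n => (blk N (plusB s) n).getD n 0 := gtm_eq_blk N s
  have hpslen : (plusB s).length = s.length := plusB_length hsne
  have htau : ∀ k, k < s.length → gtm N s k = (plusB s).getD k 0 := by
    intro k hk
    rw [hgtm]
    exact G_eval0 (by rwa [hpslen])
  by_cases hueq : u = s.take u.length
  · -- u is exactly the first p digits of s
    rcases eq_or_lt_of_le hle with hpq | hpq
    · -- p = q : first difference at p-1
      have hus : u = s := by rw [hueq, hpq, List.take_length]
      left
      refine ⟨u.length - 1, ?_, ?_⟩
      · intro k hk
        dsimp only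
        rw [G_eval0 (by omega), htau k (by omega), ← hus]
        exact (plusB_getD_lt (by omega)).symm
      · dsimp only
        rw [G_eval0 (by omega), htau (u.length - 1) (by omega), ← hus,
          plusB_getD_last hu]
        omega
    · -- p < q : the hard case
      have hd_ne : s.drop u.length ≠ [] := by
        have := List.length_drop (i := u.length) (l := s)
        intro hcon
        rw [hcon] at this
        simp at this
        omega
      set d := s.drop u.length with hd
      have hm : d.length = s.length - u.length := List.length_drop
      have hsud : s = u ++ d := by
        rw [hueq, hd]
        exact (List.take_append_drop _ _).symm
      have hps : plusB s = u ++ plusB d := by rw [hsud, plusB_append u hd_ne]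
      have hRulen : (reflB N u).length = u.length := reflB_length N u
      have hRune : reflB N u ≠ [] := reflB_ne_nil hu
      have hrr : reflB N (reflB N u) = u := reflB_reflB hub
      have hS1 := (hsineq u.length (by omega)).1
      have hS1' : reflB N u ++ reflB N d ≤ d ++ u := by
        have h1 : reflB N s = reflB N u ++ reflB N d := by rw [hsud, reflB_append]
        have h2 : rotB s u.length = d ++ u := by
          show s.drop u.length ++ s.take u.length = d ++ u
          rw [← hueq, hd]
        rwa [h1, h2] at hS1
      -- evaluation of the two sequences on [0, p) and [p, p+min(m,p))
      have htau_lo : ∀ k, k < u.length → gtm N s k = u.getD k 0 := by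
        intro k hk
        rw [htau k (by omega), hps, List.getD_append _ _ _ _ hk]
      have htau_hi : ∀ i, i < d.length → gtm N s (u.length + i) = (plusB d).getD i 0 := by
        intro i hi
        rw [htau _ (by omega), hps, List.getD_append_right _ _ _ _ (by omega)]
        congr 1
        omega
      have hsig_lo : ∀ k, k < u.length → (blk N u k).getD k 0 = u.getD k 0 :=
        fun k hk => G_eval0 hk
      have hsig_hi : ∀ i, i < u.length →
          (blk N u (u.length + i)).getD (u.length + i) 0 = (plusB (reflB N u)).getD i 0 := by
        intro i hi
        rw [G_eval1 hu (by omega), List.getD_append_right _ _ _ _ (by omega)]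
        congr 1
        omega
      -- the case where the generator of s is exactly the doubled generator
      have heqcase : plusB d = plusB (reflB N u) →
          seqLe (fun n => (blk N u n).getD n 0) (gtm N s) := by
        intro hpd
        right
        rw [hgtm, hps, hpd]
        exact (G_shift hu).symm
      rcases lcp d (reflB N u) with ⟨c, a, b, x', y', hab, hdc, hRc⟩ | hpre | hpre
      · -- d and reflB u differ first at index j = c.length
        have hjp : c.length < u.length := by
          have : (reflB N u).length = c.length + 1 + y'.length := by
            rw [hRc]; simp only [List.length_append, List.length_cons]; omega
          omega
        have hjm : c.length < d.length := by
          have : d.length = c.length + 1 + x'.length := by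
            rw [hdc]; simp only [List.length_append, List.length_cons]; omega
          omega
        have hbval : (reflB N u).getD c.length 0 = b := by
          rw [hRc, List.getD_append_right _ _ _ _ le_rfl]
          simp
        have haval : d.getD c.length 0 = a := by
          rw [hdc, List.getD_append_right _ _ _ _ le_rfl]
          simp
        rcases Nat.lt_or_ge a b with h | h
        · -- would make the rotation of s smaller than the reflection : contradiction
          exfalso
          rw [hdc, hRc] at hS1'
          simp only [List.append_assoc, List.cons_append] at hS1'
          exact not_le_split c h _ _ hS1'
        · have hba : b < a := by omega
          by_cases hrec : c.length = u.length - 1 ∧ u.length < d.length ∧ a = b + 1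
          · -- recursion : s starts with the doubled generator u ++ (reflB u)⁺
            obtain ⟨hj1, hmp, hab1⟩ := hrec
            have hy' : y' = [] := by
              have : (reflB N u).length = c.length + 1 + y'.length := by
                rw [hRc]; simp only [List.length_append, List.length_cons]; omega
              rw [← List.length_eq_zero_iff]
              omega
            rw [hy'] at hRc
            have hplusRu : plusB (reflB N u) = c ++ [a] := by
              rw [hRc, plusB_concat, hab1]
            have hu'len : (u ++ plusB (reflB N u)).length = 2 * u.length := by
              rw [List.length_append, plusB_length hRune, hRulen]
              omega
            have hs' : s = (u ++ plusB (reflB N u)) ++ x' := by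
              rw [hsud, hdc, hplusRu]
              simp
            have hstake : s.take (u ++ plusB (reflB N u)).length = u ++ plusB (reflB N u) := by
              rw [hs']
              exact List.take_left
            -- digit bounds for the new generator
            have hblast : b = N - 1 - u.getD (u.length - 1) 0 := by
              have h1 : (reflB N u).getD (u.length - 1) 0 = N - 1 - u.getD (u.length - 1) 0 :=
                reflB_getD (by omega)
            -- b is the last entry of reflB N u
              rw [hRc] at h1
              rw [List.getD_append_right _ _ _ _ (by omega)] at h1
              have h2 : u.length - 1 - c.length = 0 := by omega
              rw [h2] at h1
              simpa using h1
            have hub' : ∀ e ∈ u ++ plusB (reflB N u), e ≤ N - 1 := by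
              intro e he
              rcases List.mem_append.mp he with h1 | h1
              · exact hub e h1
              · rw [hplusRu] at h1
                rcases List.mem_append.mp h1 with h2 | h2
                · have : e ∈ reflB N u := by
                    rw [hRc]
                    exact List.mem_append.mpr (Or.inl h2)
                  exact reflB_le hub e this
                · have : e = a := by simpa using h2
                  subst this
                  omega
            have hu'last : 1 ≤ (u ++ plusB (reflB N u)).getD
                ((u ++ plusB (reflB N u)).length - 1) 0 := by
              rw [hplusRu]
              have h1 : u ++ (c ++ [a]) = (u ++ c) ++ [a] := by simp
              have h3 : ((u ++ c) ++ [a]).length - 1 = (u ++ c).length := by simp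
              rw [h1, h3, List.getD_append_right _ _ _ _ le_rfl, Nat.sub_self]
              simp
              omega
            have hres := ih (s.length - (u ++ plusB (reflB N u)).length)
              (by omega) (u ++ plusB (reflB N u)) s (le_refl _) (by simp [plusB_ne_nil])
              hub' hu'last ⟨hsne, hsdig, hslast, hsineq⟩ (by rw [hu'len]; omega)
              (by rw [hstake])
            rw [G_shift hu] at hres
            exact hres
          · -- strict difference inside the window [p, 2p)
            left
            refine ⟨u.length + c.length, ?_, ?_⟩
            · intro k hk
              dsimp only
              rcases Nat.lt_or_ge k u.length with hklo | hkhi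
              · rw [hsig_lo k hklo, htau_lo k hklo]
              · obtain ⟨i, rfl⟩ : ∃ i, k = u.length + i := ⟨k - u.length, by omega⟩
                have hij : i < c.length := by omega
                rw [hsig_hi i (by omega), htau_hi i (by omega)]
                rw [plusB_getD_lt (by rw [hRulen]; omega), plusB_getD_lt (by omega)]
                rw [hRc, hdc, List.getD_append _ _ _ _ hij, List.getD_append _ _ _ _ hij]
            · dsimp only
              rw [hsig_hi c.length hjp, htau_hi c.length hjm]
              -- evaluate both sides
              rcases Nat.lt_or_ge c.length (u.length - 1) with hsl | hsl
              · -- sigma value is b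
                rw [plusB_getD_lt (by rw [hRulen]; omega), hbval]
                rcases Nat.lt_or_ge c.length (d.length - 1) with htl | htl
                · rw [plusB_getD_lt (by omega), haval]; omega
                · have : c.length = d.length - 1 := by omega
                  rw [this, plusB_getD_last hd_ne, ← this, haval]
                  omega
              · -- c.length = p - 1 : sigma value is b + 1
                have hj1 : c.length = u.length - 1 := by omega
                have hsigv : (plusB (reflB N u)).getD c.length 0 = b + 1 := by
                  rw [hj1, ← hRulen] at hbval ⊢
                  rw [plusB_getD_last hRune, hbval]
                rw [hsigv]
                rcases Nat.lt_or_ge c.length (d.length - 1) with htl | htl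
                · -- here m > p, so by ¬hrec we must have a ≥ b + 2
                  rw [plusB_getD_lt (by omega), haval]
                  have hmp : u.length < d.length := by omega
                  have : a ≠ b + 1 := fun hcon => hrec ⟨hj1, hmp, hcon⟩
                  omega
                · have : c.length = d.length - 1 := by omega
                  rw [this, plusB_getD_last hd_ne, ← this, haval]
                  omega
      · -- d is a prefix of reflB u
        obtain ⟨rest, hrest⟩ := hpre
        by_cases hrnil : rest = []
        · rw [hrnil, List.append_nil] at hrest
          exact heqcase (by rw [hrest])
        · -- m < p : strict difference at position q - 1
          have hmp : d.length < u.length := by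
            have : (reflB N u).length = d.length + rest.length := by rw [← hrest]; simp
            have : 0 < rest.length := List.length_pos_iff.mpr hrnil
            omega
          left
          refine ⟨u.length + (d.length - 1), ?_, ?_⟩
          · intro k hk
            dsimp only
            rcases Nat.lt_or_ge k u.length with hklo | hkhi
            · rw [hsig_lo k hklo, htau_lo k hklo]
            · obtain ⟨i, rfl⟩ : ∃ i, k = u.length + i := ⟨k - u.length, by omega⟩
              have hij : i < d.length - 1 := by omega
              rw [hsig_hi i (by omega), htau_hi i (by omega)]
              rw [plusB_getD_lt (by rw [hRulen]; omega), plusB_getD_lt (by omega)]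
              rw [← hrest, List.getD_append _ _ _ _ (by omega)]
          · dsimp only
            rw [hsig_hi (d.length - 1) (by omega), htau_hi (d.length - 1) (by omega)]
            rw [plusB_getD_lt (by rw [hRulen]; omega), plusB_getD_last hd_ne]
            rw [← hrest, List.getD_append _ _ _ _ (by omega)]
            omega
      · -- reflB u is a prefix of d
        obtain ⟨z, hzz⟩ := hpre
        by_cases hznil : z = []
        · rw [hznil, List.append_nil] at hzz
          exact heqcase (by rw [← hzz])
        · -- q > 2p and s starts with u ++ reflB u : impossible
          exfalso
          have hdlen : d.length = u.length + z.length := by rw [← hzz]; simp [hRulen]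
          have hzlen : 1 ≤ z.length := List.length_pos_iff.mpr hznil
          have A1 : u ++ reflB N z ≤ z ++ u := by
            have h1 : reflB N d = u ++ reflB N z := by
              rw [← hzz, reflB_append, hrr]
            rw [h1, ← hzz] at hS1'
            simp only [List.append_assoc] at hS1'
            exact (append_le_left (reflB N u)).mp hS1'
          have B1 : plusB z ++ (reflB N u ++ u) ≤ u ++ (reflB N u ++ plusB z) := by
            have hS2 := (hsineq (2 * u.length) (by omega)).2
            have hsz : s = (u ++ reflB N u) ++ z := by
              rw [hsud, ← hzz, List.append_assoc]
            have hlen2 : (u ++ reflB N u).length = 2 * u.length := by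
              rw [List.length_append, hRulen]; omega
            have hdrop : s.drop (2 * u.length) = z := by
              rw [hsz, ← hlen2]
              exact List.drop_left
            have htake : s.take (2 * u.length) = u ++ reflB N u := by
              rw [hsz, ← hlen2]
              exact List.take_left
            have hrefl2 : reflB N (u ++ reflB N u) = reflB N u ++ u := by
              rw [reflB_append, hrr]
            have hps2 : plusB s = u ++ (reflB N u ++ plusB z) := by
              rw [hsz, plusB_append _ hznil, List.append_assoc]
            rw [hdrop, htake, hrefl2, hps2] at hS2
            simpa only [List.append_assoc] using hS2
          exact (Zlem hu hub z.length z le_rfl hznil).1 ⟨A1, B1⟩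
  · -- u is not a prefix of s : strict difference within the first p letters
    have hlt : u < s.take u.length := lt_of_le_of_ne hup hueq
    have hlentake : (s.take u.length).length = u.length := by
      rw [List.length_take]
      omega
    rcases lcp u (s.take u.length) with ⟨c, a, b, x', y', hab, hxc, hyc⟩ | hpre | hpre
    · rcases Nat.lt_or_ge b a with h | h
      · exfalso
        have : s.take u.length < u := by
          rw [hyc, hxc]
          exact lt_split c h _ _
        exact absurd hlt (not_lt.mpr (le_of_lt this))
      · have hba : a < b := by omega
        have hjp : c.length < u.length := by
          have : u.length = c.length + 1 + x'.length := by
            rw [hxc]; simp only [List.length_append, List.length_cons]; omega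
          omega
        left
        refine ⟨c.length, ?_, ?_⟩
        · intro k hk
          dsimp only
          rw [G_eval0 (by omega), htau k (by omega)]
          have h1 : (plusB s).getD k 0 = s.getD k 0 := plusB_getD_lt (by omega)
          have h2 : u.getD k 0 = c.getD k 0 := by
            rw [hxc]; exact List.getD_append _ _ _ _ hk
          have h3 : s.getD k 0 = c.getD k 0 := by
            rw [← getD_take (show k < u.length by omega) hle, hyc]
            exact List.getD_append _ _ _ _ hk
          rw [h1, h2, h3]
        · dsimp only
          rw [G_eval0 hjp, htau c.length (by omega)]
          have h2 : u.getD c.length 0 = a := by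
            rw [hxc, List.getD_append_right _ _ _ _ le_rfl]
            simp
          have h3 : s.getD c.length 0 = b := by
            rw [← getD_take hjp hle, hyc, List.getD_append_right _ _ _ _ le_rfl]
            simp
          have h4 := getD_le_plusB (show c.length < s.length by omega)
          omega
    · exact absurd (hpre.eq_of_length hlentake.symm) hueq
    · exact absurd ((hpre.eq_of_length hlentake).symm) hueq

end S10

/-- Lemma 5.8 — for admissible blocks `s` (length `q`) and
`t` (length `p`) with `q ≥ p`, if `s_1⋯s_p > t_1⋯t_p` then GTM(`s^+`) `≥` GTM(`t^+`). -/
theorem stmt10 (N : ℕ) (hN : 2 ≤ N) (s t : List ℕ)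
    (hs : Admissible N s) (ht : Admissible N t) (hlen : t.length ≤ s.length)
    (h : t < s.take t.length) :
    seqLe (gtm N t) (gtm N s) := by
  obtain ⟨htne, htdig, htlast, htineq⟩ := ht
  have hplen : (plusB t).length = t.length := S10.plusB_length htne
  obtain ⟨c0, a0, hta⟩ := S10.exists_concat htne
  have hgl : t.getLast! = a0 :=
    List.getLast!_of_getLast? (by rw [hta]; exact List.getLast?_concat)
  have hpt : plusB t = c0 ++ [a0 + 1] := by rw [hta, S10.plusB_concat]
  have hub : ∀ c ∈ plusB t, c ≤ N - 1 := by
    intro c hc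
    rw [hpt] at hc
    rcases List.mem_append.mp hc with h1 | h1
    · have h2 : c ∈ t := by rw [hta]; exact List.mem_append.mpr (Or.inl h1)
      have := htdig c h2
      omega
    · have h2 : c = a0 + 1 := by simpa using h1
      subst h2
      rw [hgl] at htlast
      omega
  have hulast : 1 ≤ (plusB t).getD ((plusB t).length - 1) 0 := by
    rw [hpt]
    have h3 : (c0 ++ [a0 + 1]).length - 1 = c0.length := by simp
    rw [h3, List.getD_append_right _ _ _ _ le_rfl, Nat.sub_self]
    simp
  have hlentake : (s.take t.length).length = t.length := by
    rw [List.length_take]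
    omega
  have hup : plusB t ≤ s.take (plusB t).length := by
    rw [hplen]
    rcases S10.lcp t (s.take t.length) with ⟨c, a, b, x', y', hab, hxc, hyc⟩ | hpre | hpre
    · rcases Nat.lt_or_ge b a with hba | hba
      · exfalso
        have hlt2 : s.take t.length < t := by
          rw [hyc, hxc]
          exact S10.lt_split c hba _ _
        exact absurd h (not_lt.mpr (le_of_lt hlt2))
      · have hba' : a < b := by omega
        by_cases hx'nil : x' = []
        · rw [hx'nil] at hxc
          have hy'nil : y' = [] := by
            have h1 : t.length = c.length + 1 := by rw [hxc]; simp
            have h2 : t.length = c.length + 1 + y'.length := by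
              rw [← hlentake, hyc]
              simp only [List.length_append, List.length_cons]
              omega
            rw [← List.length_eq_zero_iff]
            omega
          rw [hy'nil] at hyc
          have hpt2 : plusB t = c ++ [a + 1] := by
            rw [hxc]
            exact S10.plusB_concat c a
          rw [hpt2, hyc]
          rcases Nat.lt_or_ge (a + 1) b with h5 | h5
          · exact le_of_lt (S10.lt_split c h5 _ _)
          · have : a + 1 = b := by omega
            rw [this]
        · have hpt2 : plusB t = c ++ a :: plusB x' := by
            rw [hxc, S10.plusB_append c (by simp), S10.plusB_cons a hx'nil]
          rw [hpt2, hyc]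
          exact le_of_lt (S10.lt_split c hba' _ _)
    · exfalso
      have := hpre.eq_of_length hlentake.symm
      rw [← this] at h
      exact lt_irrefl _ h
    · exfalso
      have := hpre.eq_of_length hlentake
      rw [this] at h
      exact lt_irrefl _ h
  have hres := S10.main N hN (s.length - (plusB t).length) (plusB t) s le_rfl
    (S10.plusB_ne_nil t) hub hulast hs (by rw [hplen]; exact hlen) hup
  rw [S10.gtm_eq_blk N t]
  exact hres
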